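/- arXiv:2106.02832 — 3 statements merged into one kernel-verified Lean document; each statement's English description precedes it below -/
import Mathlib

section
/- For λ with Im(λ) > 0 and any z in the upper half plane, Im(f_λ^n(z)) > n·Im(λ) + Im(z) for every natural number n ≥ 1; in particular f_λ^n(z) → ∞ as n → ∞. -/
open Complex Filter

lemma cos_ne_zero_of_im_pos {z : ℂ} (hz : 0 < z.im) : Complex.cos z ≠ 0 := by
  intro h
  rw [Complex.cos_eq_zero_iff] at h
  obtain ⟨k, hk⟩ := h
  have : z.im = 0 := by
    rw [hk]
    simp
  linarith

lemma im_tan_pos {z : ℂ} (hz : 0 < z.im) : 0 < (Complex.tan z).im := by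
  have hc := cos_ne_zero_of_im_pos hz
  have hN : 0 < Complex.normSq (Complex.cos z) := Complex.normSq_pos.mpr hc
  have hs_re : (Complex.sin z).re = Real.sin z.re * Real.cosh z.im := by
    rw [Complex.sin_eq]
    simp [← Complex.ofReal_sin, ← Complex.ofReal_cos, ← Complex.ofReal_sinh,
      ← Complex.ofReal_cosh]
  have hs_im : (Complex.sin z).im = Real.cos z.re * Real.sinh z.im := by
    rw [Complex.sin_eq]
    simp [← Complex.ofReal_sin, ← Complex.ofReal_cos, ← Complex.ofReal_sinh,
      ← Complex.ofReal_cosh]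
  have hc_re : (Complex.cos z).re = Real.cos z.re * Real.cosh z.im := by
    rw [Complex.cos_eq]
    simp [← Complex.ofReal_sin, ← Complex.ofReal_cos, ← Complex.ofReal_sinh,
      ← Complex.ofReal_cosh]
  have hc_im : (Complex.cos z).im = -(Real.sin z.re * Real.sinh z.im) := by
    rw [Complex.cos_eq]
    simp [← Complex.ofReal_sin, ← Complex.ofReal_cos, ← Complex.ofReal_sinh,
      ← Complex.ofReal_cosh]
  have h : (Complex.tan z).im =
      Real.sinh z.im * Real.cosh z.im / Complex.normSq (Complex.cos z) := by
    rw [Complex.tan_eq_sin_div_cos, Complex.div_im, hs_re, hs_im, hc_re, hc_im]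
    have h1 := Real.sin_sq_add_cos_sq z.re
    field_simp
    linear_combination h1
  rw [h]
  positivity

theorem iterate_im_growth (lam z : ℂ) (hlam : 0 < lam.im) (hz : 0 < z.im) :
    (∀ n : ℕ, 1 ≤ n →
      (n : ℝ) * lam.im + z.im < ((fun w => lam + w + Complex.tan w)^[n] z).im) ∧
    Tendsto (fun n : ℕ => ‖(fun w => lam + w + Complex.tan w)^[n] z‖)
      atTop atTop := by
  set f : ℂ → ℂ := fun w => lam + w + Complex.tan w with hf
  have key : ∀ n : ℕ, 0 < (f^[n] z).im ∧
      (1 ≤ n → (n : ℝ) * lam.im + z.im < (f^[n] z).im) := by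
    intro n
    induction n with
    | zero => exact ⟨hz, by omega⟩
    | succ m ih =>
      obtain ⟨him, hgrow⟩ := ih
      have htan := im_tan_pos him
      have himnew : (f^[m+1] z).im = lam.im + (f^[m] z).im + (Complex.tan (f^[m] z)).im := by
        rw [Function.iterate_succ_apply']
        simp [hf]
      constructor
      · rw [himnew]; linarith
      · intro _
        rw [himnew]
        rcases Nat.eq_zero_or_pos m with hm | hm
        · subst hm
          simp only [Function.iterate_zero_apply] at htan ⊢
          push_cast
          linarith
        · have := hgrow hm
          push_cast
          linarith
  have h1 : ∀ n : ℕ, 1 ≤ n →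
      (n : ℝ) * lam.im + z.im < (f^[n] z).im := fun n hn => (key n).2 hn
  refine ⟨h1, ?_⟩
  have hlow : Tendsto (fun n : ℕ => (n : ℝ) * lam.im + z.im) atTop atTop :=
    Filter.tendsto_atTop_add_const_right _ z.im
      (Filter.Tendsto.atTop_mul_const hlam tendsto_natCast_atTop_atTop)
  apply tendsto_atTop_mono' _ _ hlow
  filter_upwards [Filter.eventually_ge_atTop 1] with n hn
  calc (n : ℝ) * lam.im + z.im ≤ (f^[n] z).im := le_of_lt (h1 n hn)
    _ ≤ |(f^[n] z).im| := le_abs_self _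
    _ ≤ ‖f^[n] z‖ := Complex.abs_im_le_norm _
end

section
/- The set of solutions of cos z = i in ℂ is exactly {π/2 + nπ + i·(−1)^{n+1}·arcsinh(1) : n ∈ ℤ}, where arcsinh(1) = log(1 + √2). Equivalently, the critical points of f_λ(z) = λ + z + tan z (solutions of 1 + sec² z = 0, i.e., cos z = ±i) form the set {π/2 + nπ ± i·arcsinh(1) : n ∈ ℤ}. -/
open Complex

lemma cos_base : Complex.cos ((Real.pi : ℂ)/2 - (Real.arsinh 1 : ℝ) * Complex.I) = Complex.I := by
  rw [show ((Real.pi : ℂ)/2 - (Real.arsinh 1 : ℝ) * Complex.I)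
      = (Real.pi : ℂ)/2 - (Real.arsinh 1 : ℝ) * Complex.I by ring]
  rw [Complex.cos_pi_div_two_sub, Complex.sin_mul_I, ← Complex.ofReal_sinh,
    Real.sinh_arsinh, Complex.ofReal_one, one_mul]

lemma cos_base' : Complex.cos ((Real.pi : ℂ)/2 + (Real.arsinh 1 : ℝ) * Complex.I) = -Complex.I := by
  have := cos_base
  rw [show ((Real.pi : ℂ)/2 + (Real.arsinh 1 : ℝ) * Complex.I)
      = -((Real.pi : ℂ)/2 - (Real.arsinh 1 : ℝ) * Complex.I) + Real.pi by ring,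
    Complex.cos_add_pi, Complex.cos_neg, this]

theorem cos_eq_I_solutions :
    ({z : ℂ | Complex.cos z = Complex.I} =
      {z : ℂ | ∃ n : ℤ, z = Real.pi / 2 + (n : ℂ) * Real.pi +
        ((-1 : ℂ) ^ (n + 1) * (Real.arsinh 1 : ℝ)) * Complex.I}) ∧
    ({z : ℂ | Complex.cos z = Complex.I ∨ Complex.cos z = -Complex.I} =
      {z : ℂ | ∃ n : ℤ, z = Real.pi / 2 + (n : ℂ) * Real.pi +
          (Real.arsinh 1 : ℝ) * Complex.I ∨
        z = Real.pi / 2 + (n : ℂ) * Real.pi - (Real.arsinh 1 : ℝ) * Complex.I}) := by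
  set a : ℂ := ((Real.arsinh 1 : ℝ) : ℂ) with ha
  have h1 : ∀ z : ℂ, Complex.cos z = Complex.I ↔
      ∃ k : ℤ, z = 2 * k * Real.pi + ((Real.pi : ℂ)/2 - a * Complex.I) ∨
        z = 2 * k * Real.pi - ((Real.pi : ℂ)/2 - a * Complex.I) := by
    intro z
    rw [show (Complex.cos z = Complex.I ↔
        Complex.cos ((Real.pi : ℂ)/2 - a * Complex.I) = Complex.cos z) by
      rw [cos_base, eq_comm], Complex.cos_eq_cos_iff]
  have h2 : ∀ z : ℂ, Complex.cos z = -Complex.I ↔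
      ∃ k : ℤ, z = 2 * k * Real.pi + ((Real.pi : ℂ)/2 + a * Complex.I) ∨
        z = 2 * k * Real.pi - ((Real.pi : ℂ)/2 + a * Complex.I) := by
    intro z
    rw [show (Complex.cos z = -Complex.I ↔
        Complex.cos ((Real.pi : ℂ)/2 + a * Complex.I) = Complex.cos z) by
      rw [cos_base', eq_comm], Complex.cos_eq_cos_iff]
  constructor
  · ext z
    simp only [Set.mem_setOf_eq, h1]
    constructor
    · rintro ⟨k, hk | hk⟩
      · refine ⟨2*k, ?_⟩
        have h : ((-1:ℂ))^(2*k + 1 : ℤ) = -1 := by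
          rw [zpow_add_one₀ (by norm_num : (-1:ℂ) ≠ 0), zpow_mul]; norm_num
        rw [hk, h]; push_cast; ring
      · refine ⟨2*k - 1, ?_⟩
        have h : ((-1:ℂ))^(2*k - 1 + 1 : ℤ) = 1 := by
          rw [show (2*k-1+1 : ℤ) = 2*k by ring, zpow_mul]; norm_num
        rw [hk, h]; push_cast; ring
    · rintro ⟨n, hn⟩
      rcases Int.even_or_odd n with ⟨k, hkn⟩ | ⟨k, hkn⟩
      · refine ⟨k, Or.inl ?_⟩
        rw [hn, hkn]
        have : ((-1:ℂ))^(k + k + 1) = -1 := by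
          rw [show (k+k+1 : ℤ) = 2*k+1 by ring, zpow_add_one₀ (by norm_num), zpow_mul]
          norm_num
        rw [this]; push_cast; ring
      · refine ⟨k + 1, Or.inr ?_⟩
        rw [hn, hkn]
        have : ((-1:ℂ))^(2*k + 1 + 1) = 1 := by
          rw [show (2*k+1+1 : ℤ) = 2*(k+1) by ring, zpow_mul]; norm_num
        rw [this]; push_cast; ring
  · ext z
    simp only [Set.mem_setOf_eq, h1, h2]
    constructor
    · rintro (⟨k, hk | hk⟩ | ⟨k, hk | hk⟩)
      · exact ⟨2*k, Or.inr (by rw [hk]; push_cast; ring)⟩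
      · exact ⟨2*k - 1, Or.inl (by rw [hk]; push_cast; ring)⟩
      · exact ⟨2*k, Or.inl (by rw [hk]; push_cast; ring)⟩
      · exact ⟨2*k - 1, Or.inr (by rw [hk]; push_cast; ring)⟩
    · rintro ⟨n, hn | hn⟩
      · rcases Int.even_or_odd n with ⟨k, hkn⟩ | ⟨k, hkn⟩
        · exact Or.inr ⟨k, Or.inl (by rw [hn, hkn]; push_cast; ring)⟩
        · exact Or.inl ⟨k + 1, Or.inr (by rw [hn, hkn]; push_cast; ring)⟩
      · rcases Int.even_or_odd n with ⟨k, hkn⟩ | ⟨k, hkn⟩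
        · exact Or.inl ⟨k, Or.inl (by rw [hn, hkn]; push_cast; ring)⟩
        · exact Or.inr ⟨k + 1, Or.inr (by rw [hn, hkn]; push_cast; ring)⟩
end

section
/- If m is an integer and x is a real number with |x − (mπ + π/2)| ≤ π/16, then π/2 − 0.6658 − sinh(1.3316)/(cos(2x) + cosh(1.3316)) < −0.6658. -/
theorem estimate_three (m : ℤ) (x : ℝ)
    (hx : |x - (m * Real.pi + Real.pi / 2)| ≤ Real.pi / 16) :
    Real.pi / 2 - 0.6658 -
        Real.sinh 1.3316 / (Real.cos (2 * x) + Real.cosh 1.3316) <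
      -0.6658 := by
  have hpi1 : (3.141592 : ℝ) < Real.pi := Real.pi_gt_d6
  have hpi2 : Real.pi < 3.141593 := Real.pi_lt_d6
  set E := Real.exp 1.3316 with hE
  set E' := Real.exp (-1.3316) with hE'
  have hEE' : E * E' = 1 := by
    rw [hE, hE', ← Real.exp_add]; norm_num
  have hE'pos : (0:ℝ) < E' := Real.exp_pos _
  -- exp bounds
  have hElo : (3.7775 : ℝ) < E := by
    have h := Real.sum_le_exp_of_nonneg (x := 1.3316) (by norm_num) 6
    have h2 : (3.7775 : ℝ) < ∑ i ∈ Finset.range 6, (1.3316:ℝ) ^ i / (Nat.factorial i : ℝ) := by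
      simp [Finset.sum_range_succ, Nat.factorial]
      norm_num
    rw [hE]; linarith
  have hEhi : E < 3.89 := by
    have h1 : (0.96671 : ℝ) ≤ Real.exp (-(1.3316/40)) := by
      have := Real.add_one_le_exp (-(1.3316/40) : ℝ)
      linarith
    have h2 : (0.96671 : ℝ)^40 ≤ Real.exp (-(1.3316/40)) ^ 40 :=
      pow_le_pow_left₀ (by norm_num) h1 40
    rw [← Real.exp_nat_mul] at h2
    have h25 : ((40:ℕ):ℝ) * -(1.3316/40) = -1.3316 := by norm_num
    rw [h25] at h2
    have h3 : (0.257069 : ℝ) < E' := by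
      have : (0.257069 : ℝ) < (0.96671 : ℝ)^40 := by norm_num
      rw [hE']; linarith
    nlinarith
  have hE'hi : E' < 0.2648 := by nlinarith
  -- cos bound
  have hcos8 : (0.92385 : ℝ) < Real.cos (Real.pi / 8) := by
    rw [Real.cos_pi_div_eight]
    have h2 : (1.4142 : ℝ) < Real.sqrt 2 := by
      rw [show (1.4142:ℝ) = Real.sqrt (1.4142^2) by
        rw [Real.sqrt_sq]; norm_num]
      exact Real.sqrt_lt_sqrt (by positivity) (by norm_num)
    have h3 : (1.8477 : ℝ) < Real.sqrt (2 + Real.sqrt 2) := by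
      rw [show (1.8477:ℝ) = Real.sqrt (1.8477^2) by
        rw [Real.sqrt_sq]; norm_num]
      exact Real.sqrt_lt_sqrt (by positivity) (by nlinarith)
    linarith
  -- cos (2x) ≤ -cos (π/8)
  set u := x - (m * Real.pi + Real.pi / 2) with hu
  have h2x : (2:ℝ) * x = (2*u + Real.pi) + m * (2 * Real.pi) := by
    rw [hu]; ring
  have hcos2x : Real.cos (2*x) = -Real.cos (2*u) := by
    rw [h2x, Real.cos_add_int_mul_two_pi, Real.cos_add_pi]
  have habs : |2*u| ≤ Real.pi / 8 := by
    rw [abs_mul, abs_two]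
    rw [hu]
    linarith [hx]
  have hcosu : Real.cos (Real.pi/8) ≤ Real.cos (2*u) := by
    rw [← Real.cos_abs (2*u)]
    exact Real.cos_le_cos_of_nonneg_of_le_pi (abs_nonneg _) (by linarith) habs
  have hcos2x' : Real.cos (2*x) ≤ -Real.cos (Real.pi/8) := by
    rw [hcos2x]; linarith
  -- put it together
  have hcosh : Real.cosh 1.3316 = (E + E') / 2 := by
    rw [Real.cosh_eq]
  have hsinh : Real.sinh 1.3316 = (E - E') / 2 := by
    rw [Real.sinh_eq]
  set d := Real.cos (2*x) + Real.cosh 1.3316 with hd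
  have hdpos : (0:ℝ) < d := by
    rw [hd, hcosh]
    have := Real.neg_one_le_cos (2*x)
    nlinarith
  have hdle : d ≤ (E + E')/2 - 0.92385 := by
    rw [hd, hcosh]; linarith
  have key : Real.pi / 2 * d < Real.sinh 1.3316 := by
    rw [hsinh]
    nlinarith [hdle, hdpos, hElo, hEhi, hE'hi, hE'pos]
  have : Real.pi / 2 < Real.sinh 1.3316 / d := by
    rw [lt_div_iff₀ hdpos]
    linarith
  linarith
end
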